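/- Let M(𝒜,ℬ) be a principal group of directed automorphisms of a spherically homogeneous rooted tree T_m̄ with bounded valencies. Then for every element h ∈ M(𝒜,ℬ) there exists n_h ∈ ℕ such that for every n ≥ n_h and every level-n vertex w, the section h|_w lies in 𝒜_n ∪ ℬ_n. -/

import Mathlib

open scoped ENNReal
namespace Paper
abbrev Vertex (m : ℕ → ℕ) (n : ℕ) := (i : Fin n) → Fin (m i)
variable {m : ℕ → ℕ}
def restr {n : ℕ} (w : Vertex m (n + 1)) : Vertex m n := fun i => w i.castSucc
def restrLe {n N : ℕ} (h : n ≤ N) (w : Vertex m N) : Vertex m n :=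
  fun i => w ⟨i, lt_of_lt_of_le i.2 h⟩
def AutT (m : ℕ → ℕ) : Subgroup (∀ n, Equiv.Perm (Vertex m n)) where
  carrier := {g | ∀ (n : ℕ) (w : Vertex m (n + 1)), restr (g (n + 1) w) = g n (restr w)}
  one_mem' := by intro n w; rfl
  mul_mem' := by
    intro a b ha hb n w
    show restr ((a (n+1)) ((b (n+1)) w)) = (a n) ((b n) (restr w))
    rw [ha, hb]
  inv_mem' := by
    intro a ha n w
    show restr ((a (n+1))⁻¹ w) = (a n)⁻¹ (restr w)
    apply (a n).injective
    have h1 := ha n ((a (n+1))⁻¹ w)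
    rw [show (a (n+1)) ((a (n+1))⁻¹ w) = w from Equiv.apply_symm_apply _ _] at h1
    rw [← h1]
    exact (Equiv.apply_symm_apply _ _).symm
def app {n : ℕ} (g : AutT m) (v : Vertex m n) : Vertex m n := g.val n v
theorem restrLe_app (g : AutT m) : ∀ {N n : ℕ} (h : n ≤ N) (w : Vertex m N),
    restrLe h (g.val N w) = g.val n (restrLe h w) := by
  intro N
  induction N with
  | zero =>
    intro n h w
    have hn : n = 0 := Nat.le_zero.mp h
    subst hn; rfl
  | succ N ih =>
    intro n h w
    rcases Nat.eq_or_lt_of_le h with rfl | h'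
    · rfl
    · have hN : n ≤ N := Nat.lt_succ_iff.mp h'
      calc restrLe h (g.val (N+1) w) = restrLe hN (restr (g.val (N+1) w)) := rfl
        _ = restrLe hN (g.val N (restr w)) := by rw [g.prop N w]
        _ = g.val n (restrLe hN (restr w)) := ih hN _
        _ = g.val n (restrLe h w) := rfl
abbrev shift (m : ℕ → ℕ) (n : ℕ) : ℕ → ℕ := fun i => m (n + i)
def vappend {n k : ℕ} (v : Vertex (shift m n) k) (w : Vertex m n) : Vertex m (n + k) :=
  fun i => if h : (i : ℕ) < n then w ⟨i, h⟩
    else Fin.cast (congrArg m (by omega : n + ((i : ℕ) - n) = (i : ℕ)))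
      (v ⟨(i : ℕ) - n, by omega⟩)
def topPart {n k : ℕ} (u : Vertex m (n + k)) : Vertex (shift m n) k :=
  fun i => u ⟨n + i, by omega⟩

theorem topPart_vappend {n k : ℕ} (v : Vertex (shift m n) k) (w : Vertex m n) :
    topPart (vappend v w) = v := by
  funext i
  simp only [topPart, vappend, Fin.val_mk]
  rw [dif_neg (by omega)]
  apply Fin.ext
  simp only [Fin.coe_cast]
  exact congrArg (fun t : Fin k => (v t).1) (Fin.ext (by simp))

theorem restrLe_vappend {n k : ℕ} (v : Vertex (shift m n) k) (w : Vertex m n) :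
    restrLe (Nat.le_add_right n k) (vappend v w) = w := by
  funext i
  simp only [restrLe, vappend, Fin.val_mk]
  rw [dif_pos i.2]

theorem vappend_topPart {n k : ℕ} (u : Vertex m (n + k)) :
    vappend (topPart u) (restrLe (Nat.le_add_right n k) u) = u := by
  funext i
  by_cases h : (i : ℕ) < n
  · simp only [vappend, restrLe]
    rw [dif_pos h]
  · simp only [vappend, topPart, Fin.val_mk]
    rw [dif_neg h]
    apply Fin.ext
    simp only [Fin.coe_cast]
    exact congrArg (fun t : Fin (n+k) => (u t).1) (Fin.ext (by simp; omega))

theorem restr_vappend {n k : ℕ} (v : Vertex (shift m n) (k + 1)) (w : Vertex m n) :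
    restr (n := n + k) (vappend (n := n) (k := k + 1) v w) = vappend (restr v) w := by
  funext i
  by_cases h : (i : ℕ) < n
  · show vappend v w (Fin.castSucc i) = vappend (restr v) w i
    simp only [vappend]
    rw [dif_pos (show ((Fin.castSucc i : Fin (n+k+1)) : ℕ) < n from h), dif_pos h]
    rfl
  · show vappend v w (Fin.castSucc i) = vappend (restr v) w i
    simp only [vappend]
    rw [dif_neg (show ¬ ((Fin.castSucc i : Fin (n+k+1)) : ℕ) < n from h), dif_neg h]
    rfl

def secFun (g : AutT m) {n : ℕ} (w : Vertex m n) (k : ℕ)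
    (v : Vertex (shift m n) k) : Vertex (shift m n) k :=
  topPart (g.val (n + k) (vappend v w))

theorem secFun_spec (g : AutT m) {n : ℕ} (w : Vertex m n) (k : ℕ)
    (v : Vertex (shift m n) k) :
    g.val (n + k) (vappend v w) = vappend (secFun g w k v) (g.val n w) := by
  have h1 : restrLe (Nat.le_add_right n k) (g.val (n + k) (vappend v w)) = g.val n w := by
    rw [restrLe_app, restrLe_vappend]
  conv_lhs => rw [← vappend_topPart (g.val (n + k) (vappend v w))]
  rw [h1]
  rfl

theorem coe_inv_app (g : AutT m) (N : ℕ) (u : Vertex m N) :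
    (g⁻¹ : AutT m).val N ((g : AutT m).val N u) = u := by
  have h : ((g⁻¹ : AutT m) : ∀ n, Equiv.Perm (Vertex m n)) = (↑g)⁻¹ := rfl
  rw [h]
  exact Equiv.symm_apply_apply _ _

theorem secFun_left_inv (g : AutT m) {n : ℕ} (w : Vertex m n) (k : ℕ)
    (v : Vertex (shift m n) k) :
    secFun g⁻¹ (g.val n w) k (secFun g w k v) = v := by
  show topPart ((g⁻¹ : AutT m).val (n+k) (vappend (secFun g w k v) (g.val n w))) = v
  rw [← secFun_spec g w k v, coe_inv_app, topPart_vappend]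

def sectionEquiv (g : AutT m) {n : ℕ} (w : Vertex m n) (k : ℕ) :
    Equiv.Perm (Vertex (shift m n) k) where
  toFun := secFun g w k
  invFun := secFun g⁻¹ (g.val n w) k
  left_inv v := secFun_left_inv g w k v
  right_inv v := by
    have h2 : (g⁻¹ : AutT m)⁻¹ = g := inv_inv g
    have h3 : (g⁻¹ : AutT m).val n (g.val n w) = w := coe_inv_app g n w
    calc secFun g w k (secFun g⁻¹ (g.val n w) k v)
        = secFun (g⁻¹)⁻¹ ((g⁻¹ : AutT m).val n (g.val n w)) k
            (secFun g⁻¹ (g.val n w) k v) := by rw [h2, h3]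
      _ = v := secFun_left_inv g⁻¹ (g.val n w) k v

theorem secFun_restr (g : AutT m) {n : ℕ} (w : Vertex m n) (k : ℕ)
    (v : Vertex (shift m n) (k + 1)) :
    restr (secFun g w (k + 1) v) = secFun g w k (restr v) := by
  show restr (topPart (g.val (n + (k+1)) (vappend v w)))
      = topPart (g.val (n + k) (vappend (restr v) w))
  rw [← restr_vappend (n := n) (k := k) v w, ← g.prop (n + k) (vappend (n := n) (k := k + 1) v w)]
  rfl

/-- The section `g|_w` of a tree automorphism `g` at the level-`n` vertex `w`:
the unique automorphism of the shifted tree satisfying `(vw)·g = (v·g|_w)(w·g)`. -/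
def sectionAut (g : AutT m) {n : ℕ} (w : Vertex m n) : AutT (shift m n) :=
  ⟨fun k => sectionEquiv g w k, fun k v => secFun_restr g w k v⟩


/-! ### Distinguished vertices and predicates -/

/-- The level-`n` vertex `0⋯0` on the `0`-ray. -/
def rayV (hm : ∀ i, 0 < m i) (n : ℕ) : Vertex m n := fun i => ⟨0, hm i⟩

/-- The level-`(n+1)` neighbour `x0⋯0` of the `0`-ray: its only (possibly) non-zero
letter is the leading one, equal to `x`. -/
def nbrV (hm : ∀ i, 0 < m i) {n : ℕ} (x : Fin (m n)) : Vertex m (n + 1) :=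
  fun i => if h : (i : ℕ) = n then Fin.cast (congrArg m h).symm x else ⟨0, hm i⟩

/-- The level-`n` vertex obtained from `w0` by prepending zeros. -/
def padZero (hm : ∀ i, 0 < m i) {n₀ : ℕ} (w0 : Vertex m n₀) (n : ℕ) : Vertex m n :=
  fun i => if h : (i : ℕ) < n₀ then w0 ⟨i, h⟩ else ⟨0, hm i⟩

/-- The level-`(n+1)` vertex `x0⋯0w0`: the word `w0` at the bottom, the letter `x`
in the leading position, and zeros in between. -/
def padLead (hm : ∀ i, 0 < m i) {n₀ : ℕ} (w0 : Vertex m n₀) {n : ℕ} (x : Fin (m n)) :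
    Vertex m (n + 1) :=
  fun i => if h : (i : ℕ) < n₀ then w0 ⟨i, h⟩
    else if h2 : (i : ℕ) = n then Fin.cast (congrArg m h2).symm x else ⟨0, hm i⟩

/-- `w` lies on the `0`-ray. -/
def OnRay {n : ℕ} (w : Vertex m n) : Prop := ∀ i, (w i : ℕ) = 0

/-- `w` is a neighbour of the `0`-ray: its leading letter is non-zero and all other
letters are zero. -/
def IsNbr {n : ℕ} (w : Vertex m n) : Prop :=
  ∃ hn : 0 < n, (w ⟨n - 1, by omega⟩ : ℕ) ≠ 0 ∧
    ∀ i : Fin n, (i : ℕ) < n - 1 → (w i : ℕ) = 0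

/-- A *rooted* automorphism: it permutes the first level and all its sections at
vertices of level `≥ 1` are trivial (i.e. it is an element of `Sym(X_{m_1})`). -/
def IsRooted (g : AutT m) : Prop :=
  ∀ (n : ℕ) (w : Vertex m n), 0 < n → sectionAut g w = 1

/-- A *directed automorphism along the `0`-ray* (an element of `H_m̄`): it fixes the
`0`-ray, its sections away from the ray and its neighbours are trivial, and its
sections at neighbours of the ray are rooted. -/
def IsDirectedAut (g : AutT m) : Prop :=
  (∀ (n : ℕ) (w : Vertex m n), OnRay w → g.val n w = w) ∧
  (∀ (n : ℕ) (w : Vertex m n), ¬ OnRay w → ¬ IsNbr w → sectionAut g w = 1) ∧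
  (∀ (n : ℕ) (w : Vertex m n), IsNbr w → IsRooted (sectionAut g w))

/-- The group `𝒜_n` of `n`-th level sections of `𝒜` along the `0`-ray. -/
def Asub (hm : ∀ i, 0 < m i) (A : Subgroup (AutT m)) (n : ℕ) :
    Subgroup (AutT (shift m n)) :=
  Subgroup.closure {h | ∃ a ∈ A, h = sectionAut a (rayV hm n)}

/-- The group `ℬ_n` generated by the `n`-th level sections of `𝒜` at the neighbours
of the `0`-ray (trivial for `n = 0`, where there are no neighbours). -/
def Bsub (hm : ∀ i, 0 < m i) (A : Subgroup (AutT m)) : (n : ℕ) → Subgroup (AutT (shift m n))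
  | 0 => ⊥
  | (k + 1) =>
    Subgroup.closure {h | ∃ a ∈ A, ∃ x : Fin (m k), (x : ℕ) ≠ 0 ∧ h = sectionAut a (nbrV hm x)}

/-- The condition, for a word `w`, that position `i` is the position situated just
above the lowest non-zero letter of `w`. -/
def SpineCond {n : ℕ} (w : Vertex m n) (i : Fin n) : Prop :=
  ∃ p : Fin n, (w p : ℕ) ≠ 0 ∧ (∀ q : Fin n, (q : ℕ) < (p : ℕ) → (w q : ℕ) = 0) ∧
    (i : ℕ) = (p : ℕ) + 1

open Classical in
/-- The action of the spine-permutation automorphism `h_σ̄`: the letter just above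
the lowest non-zero letter is permuted (by the permutation attached to its
alphabet size); all-zero words are fixed. -/
noncomputable def spineFun (σ : ∀ j : ℕ, Equiv.Perm (Fin j)) {n : ℕ} (w : Vertex m n) :
    Vertex m n :=
  fun i => if SpineCond w i then (σ (m i)) (w i) else w i

/-! ### Probability measures, entropy, random walks -/

/-- `μ` is a probability measure (given by its density on a discrete group/set). -/
def IsProbMeas {G : Type*} (μ : G → ℝ) : Prop := (∀ g, 0 ≤ μ g) ∧ HasSum μ 1

/-- `μ` is symmetric. -/
def IsSymmMeas {G : Type*} [Group G] (μ : G → ℝ) : Prop := ∀ g, μ g⁻¹ = μ g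

/-- Convolution of two measures on a discrete group. -/
noncomputable def conv {G : Type*} [Group G] (μ ν : G → ℝ) : G → ℝ :=
  fun g => ∑' h, μ h * ν (h⁻¹ * g)

open Classical in
/-- `k`-fold convolution power `μ^{*k}` (with `μ^{*0} = δ_e`). -/
noncomputable def convPow {G : Type*} [Group G] (μ : G → ℝ) : ℕ → G → ℝ
  | 0 => fun g => if g = 1 then 1 else 0
  | (k + 1) => conv μ (convPow μ k)

/-- Shannon entropy `H(p) = -∑ p log p` of a discrete measure. -/
noncomputable def entropy {X : Type*} (p : X → ℝ) : ℝ := ∑' x, Real.negMulLog (p x)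

/-- Shannon entropy, valued in `ℝ≥0∞`. -/
noncomputable def entropyE {X : Type*} (p : X → ℝ) : ℝ≥0∞ :=
  ∑' x, ENNReal.ofReal (Real.negMulLog (p x))

/-- The Liouville property: every bounded `μ`-harmonic function is constant on the
subgroup generated by the support of `μ`. -/
def IsLiouville {G : Type*} [Group G] (μ : G → ℝ) : Prop :=
  ∀ f : G → ℝ, (∃ C, ∀ g, |f g| ≤ C) → (∀ g, f g = ∑' h, f (g * h) * μ h) →
    ∀ g ∈ Subgroup.closure (Function.support μ),
      ∀ h ∈ Subgroup.closure (Function.support μ), f g = f h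

/-- The position of the right random walk after `t` steps, as a function of the
increments `s 0, s 1, …` (the group element `s_t ⋯ s_2 s_1`; with this convention,
applying it to a point `x` performs the corresponding right walk on any space the
group acts on from the right). -/
def rwProd {G : Type*} [Group G] {k : ℕ} (s : Fin k → G) (t : ℕ) : G :=
  (((List.ofFn s).take t).reverse).prod

open Classical in
/-- The law of the pair (section/position) of the right `μ`-random walk observed at
the `j`-th visit of the trajectory `v·g_1, v·g_2, …` to the set `W`:
`visitLaw μ act v W sec j (h, u) = P(g at j-th visit has sec = h and position = u)`.
Here `act` is the (right) action used for the trajectory and `sec` the observable. -/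
noncomputable def visitLaw {G X H : Type*} [Group G] (μ : G → ℝ)
    (act : G → X → X) (v : X) (W : Set X) (sec : G → H) (j : ℕ) : H × X → ℝ :=
  fun p =>
    ∑' k : ℕ, ∑' s : Fin k → G,
      (∏ i, μ (s i)) *
        (if ((Finset.range k).filter fun t => act (rwProd s (t + 1)) v ∈ W).card = j
            ∧ act (rwProd s k) v ∈ W
            ∧ (sec (rwProd s k), act (rwProd s k) v) = p
          then 1 else 0)

/-! ### Electrical networks -/

/-- The Dirichlet energy of `f` with respect to the symmetric conductances `c`. -/
noncomputable def dirichlet {V : Type*} [Fintype V] (c : V → V → ℝ) (f : V → ℝ) : ℝ :=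
  (1 / 2) * ∑ u : V, ∑ v : V, c u v * (f u - f v) ^ 2

/-- Effective conductance between the disjoint vertex sets `A` and `B`. -/
noncomputable def effCond {V : Type*} [Fintype V] (c : V → V → ℝ) (A B : Set V) : ℝ :=
  sInf (dirichlet c '' {f | (∀ a ∈ A, f a = 1) ∧ (∀ b ∈ B, f b = 0)})

/-- Effective resistance between `A` and `B`, valued in `ℝ≥0∞` (infinite when the
effective conductance vanishes). -/
noncomputable def effResE {V : Type*} [Fintype V] (c : V → V → ℝ) (A B : Set V) : ℝ≥0∞ :=
  (ENNReal.ofReal (effCond c A B))⁻¹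

open Classical in
/-- Conductances of the Schreier graph of the action on level `n` with (multi-)edges
given by a generating set: `c u v = #{s ∈ gens : u·s = v}` for `u ≠ v`. -/
noncomputable def schreierCond (gens : Set (AutT m)) (n : ℕ) :
    Vertex m n → Vertex m n → ℝ :=
  fun u v => if u = v then 0 else (Set.ncard {s | s ∈ gens ∧ app s u = v} : ℝ)

open Classical in
/-- Conductances of the Schreier graph of the action on level `n`, with weights
`κ s` on the edge corresponding to the generator `s`. -/
noncomputable def schreierCondWt (S : Finset (AutT m)) (κ : AutT m → ℝ) (n : ℕ) :
    Vertex m n → Vertex m n → ℝ :=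
  fun u v => if u = v then 0 else ∑ s ∈ S.filter (fun s => app s u = v), κ s

/-- The set `𝔸_n` of level-`n` vertices where some generator `s ∈ S` has a
non-trivial section lying in `𝒜_n`. -/
def ASet (hm : ∀ i, 0 < m i) (A : Subgroup (AutT m)) (S : Finset (AutT m)) (n : ℕ) :
    Set (Vertex m n) :=
  {w | ∃ s ∈ S, sectionAut s w ∈ Asub hm A n ∧ sectionAut s w ≠ 1}

/-- The set `𝔹_n` of level-`n` vertices where some generator `s ∈ S` has a
non-trivial section lying in `ℬ_n`. -/
def BSet (hm : ∀ i, 0 < m i) (A : Subgroup (AutT m)) (S : Finset (AutT m)) (n : ℕ) :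
    Set (Vertex m n) :=
  {w | ∃ s ∈ S, sectionAut s w ∈ Bsub hm A n ∧ sectionAut s w ≠ 1}

/-- The orbit of a level-`n` vertex under a subgroup `G ≤ Aut(T_m)`. -/
def orbitOf (G : Subgroup (AutT m)) {n : ℕ} (v : Vertex m n) : Set (Vertex m n) :=
  {u | ∃ g : AutT m, g ∈ G ∧ app g v = u}

/-! ### Regular trees and automata -/

/-- The constant valency sequence (regular rooted tree `T_mm`). -/
abbrev constSeq (mm : ℕ) : ℕ → ℕ := fun _ => mm


/-- An invertible automaton over the alphabet of a regular tree: a finite set of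
automorphisms closed under taking sections at one-letter words. -/
def IsAutomaton {mm : ℕ} (A : Finset (AutT (constSeq mm))) : Prop :=
  ∀ a ∈ A, ∀ x : Vertex (constSeq mm) 1, sectionAut a x ∈ A

/-- Bounded activity: for every state `a`, the number of level-`n` words with
non-trivial section is bounded uniformly in `n`. -/
def IsBoundedActivity {mm : ℕ} (A : Finset (AutT (constSeq mm))) : Prop :=
  ∀ a ∈ A, ∃ B : ℕ, ∀ n : ℕ,
    Set.ncard {w : Vertex (constSeq mm) n | sectionAut a w ≠ 1} ≤ B

/-- Word length with respect to a finite symmetric generating set. -/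
noncomputable def wordLen {G : Type*} [Group G] (S : Set G) (g : G) : ℕ :=
  sInf {k | ∃ l : List G, l.length = k ∧ (∀ s ∈ l, s ∈ S) ∧ l.prod = g}



/-! ### Auxiliary lemmas for Statement 6 -/

section Statement6Aux

variable {m : ℕ → ℕ}

theorem sectionAut_one {n : ℕ} (w : Vertex m n) : sectionAut (1 : AutT m) w = 1 := by
  apply Subtype.ext
  funext k
  apply Equiv.ext
  intro v
  show topPart ((1 : AutT m).val (n + k) (vappend v w)) = v
  exact topPart_vappend v w

theorem sectionAut_mul (g g' : AutT m) {n : ℕ} (w : Vertex m n) :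
    sectionAut (g * g') w = sectionAut g (app g' w) * sectionAut g' w := by
  apply Subtype.ext
  funext k
  apply Equiv.ext
  intro v
  show secFun (g * g') w k v = secFun g (app g' w) k (secFun g' w k v)
  show topPart ((g * g').val (n + k) (vappend v w)) = _
  have h1 : (g * g').val (n + k) (vappend v w)
      = g.val (n + k) (g'.val (n + k) (vappend v w)) := rfl
  rw [h1, secFun_spec g' w k v]
  rfl

theorem topPart_apply_eq (g : AutT m) {n₀ k : ℕ} (u : Vertex m (n₀ + k)) :
    topPart (g.val (n₀ + k) u)
      = secFun g (restrLe (Nat.le_add_right n₀ k) u) k (topPart u) := by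
  show _ = topPart (g.val (n₀ + k) (vappend (topPart u) (restrLe (Nat.le_add_right n₀ k) u)))
  rw [vappend_topPart]

/-- A rooted automorphism only changes the letter at position `0`. -/
theorem rooted_letters {s : AutT m} (hs : IsRooted s) :
    ∀ {n : ℕ} (w : Vertex m n) (i : Fin n), 0 < (i : ℕ) →
      ((s.val n w) i : ℕ) = (w i : ℕ) := by
  intro n w i hi
  obtain ⟨k, rfl⟩ : ∃ k, n = 1 + k := ⟨n - 1, by omega⟩
  have hsec : sectionAut s (restrLe (Nat.le_add_right 1 k) w) = 1 :=
    hs 1 (restrLe (Nat.le_add_right 1 k) w) one_pos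
  have h2 : secFun s (restrLe (Nat.le_add_right 1 k) w) k (topPart w) = topPart w :=
    congrArg (fun g : AutT (shift m 1) => g.val k (topPart w)) hsec
  obtain ⟨j, hj⟩ : ∃ j : ℕ, (i : ℕ) = 1 + j := ⟨(i : ℕ) - 1, by omega⟩
  have hjk : j < k := by omega
  have e1 : i = ⟨1 + j, by omega⟩ := Fin.ext hj
  rw [e1]
  show ((topPart (s.val (1 + k) w)) ⟨j, hjk⟩ : ℕ) = ((topPart w) ⟨j, hjk⟩ : ℕ)
  rw [topPart_apply_eq, h2]

/-- A directed automorphism only changes the letters at positions `p` and `p+1`,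
where `p` is the position of the lowest non-zero letter. -/
theorem directed_letters {s : AutT m} (hs : IsDirectedAut s)
    {n : ℕ} (w : Vertex m n) (p : ℕ) (hpn : p < n) (hp : (w ⟨p, hpn⟩ : ℕ) ≠ 0)
    (hmin : ∀ q : Fin n, (q : ℕ) < p → (w q : ℕ) = 0)
    (i : Fin n) (hi : p + 1 < (i : ℕ)) : ((s.val n w) i : ℕ) = (w i : ℕ) := by
  obtain ⟨k, rfl⟩ : ∃ k, n = (p + 1) + k := ⟨n - (p + 1), by omega⟩
  set bot := restrLe (Nat.le_add_right (p + 1) k) w with hbot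
  have hnbr : IsNbr bot := by
    refine ⟨Nat.succ_pos p, ?_, ?_⟩
    · exact hp
    · intro q hq
      have hq' : (q : ℕ) < p := by
        have h2 := q.2
        simp only [Nat.add_sub_cancel] at hq
        omega
      exact hmin ⟨(q : ℕ), by have := q.2; omega⟩ hq'
  have hrooted : IsRooted (sectionAut s bot) := hs.2.2 (p + 1) bot hnbr
  obtain ⟨j, hj⟩ : ∃ j : ℕ, (i : ℕ) = (p + 1) + j := ⟨(i : ℕ) - (p + 1), by omega⟩
  have hjk : j < k := by omega
  have e1 : i = ⟨(p + 1) + j, by omega⟩ := Fin.ext hj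
  rw [e1]
  show ((topPart (s.val ((p + 1) + k) w)) ⟨j, hjk⟩ : ℕ) = ((topPart w) ⟨j, hjk⟩ : ℕ)
  rw [topPart_apply_eq]
  exact rooted_letters hrooted (topPart w) ⟨j, hjk⟩ (by show 0 < j; omega)

theorem exists_min_nonzero {n : ℕ} (w : Vertex m n) (hw : ¬ OnRay w) :
    ∃ p : ℕ, ∃ hpn : p < n, (w ⟨p, hpn⟩ : ℕ) ≠ 0 ∧
      ∀ q : Fin n, (q : ℕ) < p → (w q : ℕ) = 0 := by
  classical
  simp only [OnRay, not_forall] at hw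
  obtain ⟨i, hi⟩ := hw
  have hQ : ∃ q : ℕ, ∃ h : q < n, (w ⟨q, h⟩ : ℕ) ≠ 0 := ⟨(i : ℕ), i.2, hi⟩
  obtain ⟨hpn, hp⟩ := Nat.find_spec hQ
  refine ⟨Nat.find hQ, hpn, hp, ?_⟩
  intro q hq
  by_contra hne
  exact Nat.find_min hQ hq ⟨q.2, hne⟩

/-- `Zp t w` : all letters of `w` in positions `≥ t` vanish. -/
def Zp (t : ℕ) {n : ℕ} (w : Vertex m n) : Prop :=
  ∀ i : Fin n, t ≤ (i : ℕ) → (w i : ℕ) = 0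

theorem Zp_step {A B : Subgroup (AutT m)}
    (hAdir : ∀ a ∈ A, IsDirectedAut a) (hBrooted : ∀ b ∈ B, IsRooted b)
    {s : AutT m} (hs : s ∈ A ∨ s ∈ B) {n c : ℕ} {w : Vertex m n}
    (hz : Zp c w) : Zp (c + 1) (s.val n w) := by
  rcases hs with hA | hB
  · by_cases hray : OnRay w
    · rw [(hAdir s hA).1 n w hray]
      exact fun i hi => hz i (by omega)
    · obtain ⟨p, hpn, hp, hmin⟩ := exists_min_nonzero w hray
      have hpc : p < c := by
        by_contra hcon
        exact hp (hz ⟨p, hpn⟩ (by show c ≤ p; omega))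
      intro i hi
      rw [directed_letters (hAdir s hA) w p hpn hp hmin i (by omega)]
      exact hz i (by omega)
  · intro i hi
    rw [rooted_letters (hBrooted s hB) w i (by omega)]
    exact hz i (by omega)

theorem no_mix {A B : Subgroup (AutT m)}
    (hAdir : ∀ a ∈ A, IsDirectedAut a) (hBrooted : ∀ b ∈ B, IsRooted b)
    (l : List (AutT m)) (hl : ∀ s ∈ l, s ∈ A ∨ s ∈ B)
    {n : ℕ} (hn : l.length < n) (w : Vertex m n)
    {t₁ t₂ : ℕ} (h1 : IsNbr (app ((l.drop t₁).prod) w))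
    (h2 : OnRay (app ((l.drop t₂).prod) w)) : False := by
  set u : ℕ → Vertex m n := fun t => app ((l.drop t).prod) w with hu
  have hstep : ∀ t (ht : t < l.length), u t = (l[t]'ht).val n (u (t + 1)) := by
    intro t ht
    show app ((l.drop t).prod) w = _
    rw [List.drop_eq_getElem_cons ht, List.prod_cons]
    rfl
  have hconst : ∀ t, l.length ≤ t → u t = w := by
    intro t ht
    show app ((l.drop t).prod) w = w
    rw [List.drop_eq_nil_iff.mpr ht, List.prod_nil]
    rfl
  have fwd : ∀ d t c, Zp c (u (t + d)) → Zp (c + d) (u t) := by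
    intro d
    induction d with
    | zero => intro t c h; exact h
    | succ d ih =>
      intro t c h
      have h1' : Zp c (u ((t + 1) + d)) := by
        have e : (t + 1) + d = t + (d + 1) := by omega
        rw [e]; exact h
      have h2' : Zp (c + d) (u (t + 1)) := ih (t + 1) c h1'
      by_cases ht : t < l.length
      · rw [hstep t ht]
        exact Zp_step hAdir hBrooted (hl _ (List.getElem_mem ht)) h2'
      · have e : u t = u (t + 1) := by
          rw [hconst t (le_of_not_gt ht), hconst (t + 1) (by omega)]
        rw [e]
        exact fun i hi => h2' i (by omega)
  have bwd : ∀ d t c, Zp c (u t) → Zp (c + d) (u (t + d)) := by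
    intro d
    induction d with
    | zero => intro t c h; exact h
    | succ d ih =>
      intro t c h
      have h2' : Zp (c + d) (u (t + d)) := ih t c h
      by_cases ht : t + d < l.length
      · have hrel : u (t + d + 1) = ((l[t + d]'ht)⁻¹).val n (u (t + d)) := by
          rw [hstep (t + d) ht, coe_inv_app]
        have e : t + (d + 1) = t + d + 1 := by omega
        rw [e, hrel]
        exact Zp_step hAdir hBrooted
          ((hl _ (List.getElem_mem ht)).imp (fun hx => inv_mem hx) (fun hx => inv_mem hx)) h2'
      · have e : u (t + (d + 1)) = u (t + d) := by
          rw [hconst _ (by omega), hconst _ (by omega)]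
        rw [e]
        exact fun i hi => h2' i (by omega)
  set a := min t₂ l.length with ha
  set b := min t₁ l.length with hb
  have hua : u a = u t₂ := by
    rcases le_or_gt t₂ l.length with hc | hc
    · rw [ha, min_eq_left hc]
    · rw [ha, min_eq_right hc.le, hconst _ le_rfl, hconst _ hc.le]
  have hub : u b = u t₁ := by
    rcases le_or_gt t₁ l.length with hc | hc
    · rw [hb, min_eq_left hc]
    · rw [hb, min_eq_right hc.le, hconst _ le_rfl, hconst _ hc.le]
  have hZ0 : Zp 0 (u a) := by
    rw [hua]; exact fun i _ => h2 i
  have hZ : Zp l.length (u b) := by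
    rcases le_total a b with hab | hba
    · have hkey := bwd (b - a) a 0 hZ0
      have e : a + (b - a) = b := by omega
      rw [e] at hkey
      exact fun i hi => hkey i (by
        have : b ≤ l.length := min_le_right _ _
        omega)
    · have e : b + (a - b) = a := by omega
      have hkey := fwd (a - b) b 0 (by rw [e]; exact hZ0)
      exact fun i hi => hkey i (by
        have : a ≤ l.length := min_le_right _ _
        omega)
  rw [hub] at hZ
  obtain ⟨hn0, hxne, _⟩ := h1
  exact hxne (hZ ⟨n - 1, by omega⟩ (by show l.length ≤ n - 1; omega))

theorem sec_mem_A (hm : ∀ i, 0 < m i) {A B : Subgroup (AutT m)}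
    (hAdir : ∀ a ∈ A, IsDirectedAut a) (hBrooted : ∀ b ∈ B, IsRooted b)
    {n : ℕ} (hn : 0 < n) (w : Vertex m n) :
    ∀ l : List (AutT m), (∀ s ∈ l, s ∈ A ∨ s ∈ B) →
      (∀ t : ℕ, ¬ IsNbr (app ((l.drop (t + 1)).prod) w)) →
      sectionAut l.prod w ∈ Asub hm A n := by
  intro l
  induction l with
  | nil =>
    intro _ _
    rw [List.prod_nil, sectionAut_one]
    exact one_mem _
  | cons s l ih =>
    intro hl H
    rw [List.prod_cons, sectionAut_mul]
    have H' : ∀ t : ℕ, ¬ IsNbr (app ((l.drop t).prod) w) := fun t => H t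
    refine mul_mem ?_ (ih (fun x hx => hl x (List.mem_cons_of_mem s hx)) (fun t => H' (t + 1)))
    rcases hl s List.mem_cons_self with hA | hB
    · by_cases hray : OnRay (app l.prod w)
      · have hv : app l.prod w = rayV hm n := by
          funext i
          exact Fin.ext (hray i)
        exact Subgroup.subset_closure ⟨s, hA, by rw [hv]⟩
      · rw [(hAdir s hA).2.1 n _ hray (H' 0)]
        exact one_mem _
    · rw [hBrooted s hB n _ hn]
      exact one_mem _

theorem sec_mem_B (hm : ∀ i, 0 < m i) {A B : Subgroup (AutT m)}
    (hAdir : ∀ a ∈ A, IsDirectedAut a) (hBrooted : ∀ b ∈ B, IsRooted b)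
    {k : ℕ} (w : Vertex m (k + 1)) :
    ∀ l : List (AutT m), (∀ s ∈ l, s ∈ A ∨ s ∈ B) →
      (∀ t : ℕ, ¬ OnRay (app ((l.drop (t + 1)).prod) w)) →
      sectionAut l.prod w ∈ Bsub hm A (k + 1) := by
  intro l
  induction l with
  | nil =>
    intro _ _
    rw [List.prod_nil, sectionAut_one]
    exact one_mem _
  | cons s l ih =>
    intro hl H
    rw [List.prod_cons, sectionAut_mul]
    have H' : ∀ t : ℕ, ¬ OnRay (app ((l.drop t).prod) w) := fun t => H t
    refine mul_mem ?_ (ih (fun x hx => hl x (List.mem_cons_of_mem s hx)) (fun t => H' (t + 1)))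
    rcases hl s List.mem_cons_self with hA | hB
    · by_cases hnbr : IsNbr (app l.prod w)
      · set v := app l.prod w with hv
        obtain ⟨hn0, hx, hzero⟩ := hnbr
        have hkk : k < k + 1 := Nat.lt_succ_self k
        set x : Fin (m k) := v ⟨k, hkk⟩ with hxdef
        have hx' : (x : ℕ) ≠ 0 := hx
        have hveq : v = nbrV hm x := by
          funext i
          apply Fin.ext
          by_cases hik : (i : ℕ) = k
          · have e : i = ⟨k, hkk⟩ := Fin.ext hik
            rw [e]
            simp [nbrV, hxdef]
          · have hik' : (i : ℕ) < k := by omega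
            rw [hzero i (by omega)]
            simp [nbrV, hik]
        exact Subgroup.subset_closure ⟨s, hA, x, hx', by rw [hveq]⟩
      · have hor : ¬ OnRay (app l.prod w) := H' 0
        rw [(hAdir s hA).2.1 (k + 1) _ hor hnbr]
        exact one_mem _
    · rw [hBrooted s hB (k + 1) _ (Nat.succ_pos k)]
      exact one_mem _

end Statement6Aux

/-- For every element `h` of a principal group of directed
automorphisms `M(𝒜,ℬ)` there is `n_h` such that for all `n ≥ n_h`, all level-`n`
sections of `h` lie in `𝒜_n ∪ ℬ_n`. -/
theorem sections_eventually_in_generators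
    (m : ℕ → ℕ) (hm : ∀ i, 0 < m i) (hm2 : ∀ i, 2 ≤ m i)
    (M : ℕ) (hbd : ∀ i, m i ≤ M)
    (A B : Subgroup (AutT m))
    (hAfin : (A : Set (AutT m)).Finite) (hAdir : ∀ a ∈ A, IsDirectedAut a)
    (hBfin : (B : Set (AutT m)).Finite) (hBrooted : ∀ b ∈ B, IsRooted b) :
    ∀ h : AutT m, h ∈ A ⊔ B →
      ∃ nh : ℕ, ∀ n : ℕ, nh ≤ n → ∀ w : Vertex m n,
        sectionAut h w ∈ Asub hm A n ∨ sectionAut h w ∈ Bsub hm A n := by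
  intro h hh
  have hh1 : h ∈ Subgroup.closure ((A : Set (AutT m)) ∪ (B : Set (AutT m))) := by
    rw [Subgroup.closure_union, Subgroup.closure_eq, Subgroup.closure_eq]
    exact hh
  have hh2 : h ∈ Submonoid.closure (((A : Set (AutT m)) ∪ (B : Set (AutT m))) ∪
      ((A : Set (AutT m)) ∪ (B : Set (AutT m)))⁻¹) := by
    rw [← Subgroup.closure_toSubmonoid]
    exact hh1
  obtain ⟨l, hl, hprod⟩ := Submonoid.exists_list_of_mem_closure hh2
  have hl' : ∀ s ∈ l, s ∈ A ∨ s ∈ B := by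
    intro s hs
    rcases hl s hs with h1 | h1
    · rcases h1 with h1 | h1
      · exact Or.inl h1
      · exact Or.inr h1
    · rw [Set.mem_inv] at h1
      rcases h1 with h1 | h1
      · exact Or.inl ((inv_mem_iff (x := s)).mp h1)
      · exact Or.inr ((inv_mem_iff (x := s)).mp h1)
  refine ⟨l.length + 1, fun n hn w => ?_⟩
  rw [← hprod]
  by_cases hcase : ∀ t : ℕ, ¬ IsNbr (app ((l.drop (t + 1)).prod) w)
  · exact Or.inl (sec_mem_A hm hAdir hBrooted (by omega) w l hl' hcase)
  · right
    obtain ⟨k, rfl⟩ : ∃ k, n = k + 1 := ⟨n - 1, by omega⟩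
    apply sec_mem_B hm hAdir hBrooted w l hl'
    push_neg at hcase
    obtain ⟨t₁, hnbr⟩ := hcase
    intro t₂ hray
    exact no_mix hAdir hBrooted l hl' (by omega) w hnbr hray

end Paper
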